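/- Let G be a finite group, let ℤ denote the trivial ℤ[G]-module, and for a subgroup H ≤ G let ℤ[G/H] denote the permutation ℤ[G]-module on the left cosets of H. Then: (a) if the order of G is divisible by at least two distinct primes, there exist proper subgroups H₁, …, H_k of G (Sylow subgroups suffice) and ℤ[G]-module homomorphisms u : ℤ → ℤ[G/H₁] ⊕ ⋯ ⊕ ℤ[G/H_k] and v : ℤ[G/H₁] ⊕ ⋯ ⊕ ℤ[G/H_k] → ℤ with v ∘ u = id; and (b) if G is a nontrivial p-group for a prime p, then for any proper subgroups H₁, …, H_k of G and any ℤ[G]-module homomorphisms u : ℤ → ℤ[G/H₁] ⊕ ⋯ ⊕ ℤ[G/H_k] and v : ℤ[G/H₁] ⊕ ⋯ ⊕ ℤ[G/H_k] → ℤ, the composite v ∘ u : ℤ → ℤ is multiplication by an integer divisible by p. -/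

import Mathlib

/-!
STATEMENT 14: Let G be a finite group, ℤ the trivial ℤ[G]-module, and for H ≤ G let
ℤ[G/H] be the permutation ℤ[G]-module on the left cosets of H. Then:
(a) if the order of G is divisible by at least two distinct primes, there exist proper
subgroups H₁, …, H_k of G and ℤ[G]-module homomorphisms u : ℤ → ℤ[G/H₁] ⊕ ⋯ ⊕ ℤ[G/H_k]
and v : ℤ[G/H₁] ⊕ ⋯ ⊕ ℤ[G/H_k] → ℤ with v ∘ u = id; and
(b) if G is a nontrivial p-group for a prime p, then for any proper subgroups H₁, …, H_k
and any ℤ[G]-module homomorphisms u, v as above, the composite v ∘ u : ℤ → ℤ is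
multiplication by an integer divisible by p.

Implementation notes: `ℤ[G/H]` is `(G ⧸ H) →₀ ℤ` with `G` acting by translation on the
domain (`Finsupp.comapDistribMulAction`); a ℤ[G]-module homomorphism between permutation
modules (resp. to or from the trivial module ℤ) is an additive map which is G-equivariant.
An additive map `u : ℤ → ⊕_j ℤ[G/H_j]` (resp. `v : ⊕_j ℤ[G/H_j] → ℤ`) is the same thing
as the family of its components `u_j : ℤ → ℤ[G/H_j]` (resp. `v_j : ℤ[G/H_j] → ℤ`), and is
determined by the element `u 1` (being additive with domain ℤ); the composite `v ∘ u` is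
multiplication by the integer `∑ j, v_j (u_j 1)`, so `v ∘ u = id` reads
`∑ j, v_j (u_j 1) = 1`, and `p ∣ (v ∘ u)` reads `p ∣ ∑ j, v_j (u_j 1)`.
-/

attribute [local instance] Finsupp.comapSMul Finsupp.comapMulAction
  Finsupp.comapDistribMulAction

universe u

section Aux

variable {G : Type u} [Group G] [Finite G]

/-- The "norm" element: the constant-1 finsupp on `G ⧸ H`. -/
noncomputable def stmt14TT (H : Subgroup G) : (G ⧸ H) →₀ ℤ :=
  Finsupp.equivFunOnFinite.symm 1

lemma stmt14TT_apply (H : Subgroup G) (x : G ⧸ H) : stmt14TT H x = 1 := rfl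

lemma stmt14_smul_eval (H : Subgroup G) (g : G) (x : (G ⧸ H) →₀ ℤ) (a : G ⧸ H) :
    (g • x) (g • a) = x a := by
  rw [Finsupp.comapSMul_def, Finsupp.mapDomain_apply (MulAction.injective g)]

lemma stmt14_smul_TT (H : Subgroup G) (g : G) : g • stmt14TT H = stmt14TT H := by
  ext y
  have h := stmt14_smul_eval H g (stmt14TT H) (g⁻¹ • y)
  rw [smul_inv_smul] at h
  rw [h, stmt14TT_apply, stmt14TT_apply]

/-- The augmentation map. -/
noncomputable def stmt14vv (H : Subgroup G) [Fintype (G ⧸ H)] : ((G ⧸ H) →₀ ℤ) →+ ℤ where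
  toFun x := ∑ a, x a
  map_zero' := by simp
  map_add' x y := by simp [Finset.sum_add_distrib]

lemma stmt14vv_smul (H : Subgroup G) [Fintype (G ⧸ H)] (g : G) (x : (G ⧸ H) →₀ ℤ) :
    stmt14vv H (g • x) = stmt14vv H x := by
  show ∑ a, (g • x) a = ∑ a, x a
  calc ∑ a, (g • x) a = ∑ a, (g • x) (g • a) :=
        (Equiv.sum_comp (MulAction.toPerm g) fun a => (g • x) a).symm
    _ = ∑ a, x a := Finset.sum_congr rfl fun a _ => stmt14_smul_eval H g x a

lemma stmt14vv_single (H : Subgroup G) [Fintype (G ⧸ H)] (a : G ⧸ H) (m : ℤ) :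
    stmt14vv H (Finsupp.single a m) = m := by
  show ∑ b, Finsupp.single a m b = m
  simp [Finsupp.single_apply]

lemma stmt14vv_TT (H : Subgroup G) [Fintype (G ⧸ H)] :
    stmt14vv H (stmt14TT H) = (H.index : ℤ) := by
  show ∑ _a : G ⧸ H, (1 : ℤ) = (H.index : ℤ)
  simp [Subgroup.index, Nat.card_eq_fintype_card]

/-- The multiple-of-norm map `ℤ → ℤ[G/H]`. -/
noncomputable def stmt14uu (H : Subgroup G) (c : ℤ) : ℤ →+ ((G ⧸ H) →₀ ℤ) where
  toFun n := (n * c) • stmt14TT H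
  map_zero' := by simp
  map_add' m n := by
    show ((m + n) * c) • stmt14TT H = (m * c) • stmt14TT H + (n * c) • stmt14TT H
    rw [add_mul, add_smul]

lemma stmt14uu_smul (H : Subgroup G) (c : ℤ) (g : G) (n : ℤ) :
    g • stmt14uu H c n = stmt14uu H c n := by
  show g • ((n * c) • stmt14TT H) = (n * c) • stmt14TT H
  rw [Finsupp.comapSMul_def, Finsupp.mapDomain_smul, ← Finsupp.comapSMul_def, stmt14_smul_TT]

lemma stmt14vv_uu (H : Subgroup G) [Fintype (G ⧸ H)] (c : ℤ) :
    stmt14vv H (stmt14uu H c 1) = c * (H.index : ℤ) := by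
  show stmt14vv H ((1 * c) • stmt14TT H) = c * (H.index : ℤ)
  rw [one_mul, map_zsmul, stmt14vv_TT, smul_eq_mul]

lemma stmt14_u_const (H : Subgroup G) (u : ℤ →+ ((G ⧸ H) →₀ ℤ))
    (hu : ∀ g : G, g • u 1 = u 1) (x : G ⧸ H) :
    (u 1) x = (u 1) ((1 : G) : G ⧸ H) := by
  obtain ⟨g, hg⟩ := MulAction.exists_smul_eq G (((1 : G) : G ⧸ H)) x
  calc (u 1) x = (u 1) (g • ((1 : G) : G ⧸ H)) := by rw [hg]
    _ = (g • u 1) (g • ((1 : G) : G ⧸ H)) := by rw [hu g]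
    _ = (u 1) ((1 : G) : G ⧸ H) := stmt14_smul_eval H g (u 1) _

lemma stmt14_v_single (H : Subgroup G) (v : ((G ⧸ H) →₀ ℤ) →+ ℤ)
    (hv : ∀ (g : G) (x : (G ⧸ H) →₀ ℤ), v (g • x) = v x) (x : G ⧸ H) (m : ℤ) :
    v (Finsupp.single x m) = m * v (Finsupp.single ((1 : G) : G ⧸ H) 1) := by
  obtain ⟨g, hg⟩ := MulAction.exists_smul_eq G (((1 : G) : G ⧸ H)) x
  have h1 : v (Finsupp.single x 1) = v (Finsupp.single ((1 : G) : G ⧸ H) 1) := by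
    rw [← hg, ← Finsupp.comapSMul_single, hv]
  have h2 : Finsupp.single x m = m • Finsupp.single x (1 : ℤ) := by
    rw [Finsupp.smul_single, smul_eq_mul, mul_one]
  rw [h2, map_zsmul, h1, smul_eq_mul]

lemma stmt14_index_dvd (H : Subgroup G) (u : ℤ →+ ((G ⧸ H) →₀ ℤ))
    (v : ((G ⧸ H) →₀ ℤ) →+ ℤ)
    (hu : ∀ g : G, g • u 1 = u 1)
    (hv : ∀ (g : G) (x : (G ⧸ H) →₀ ℤ), v (g • x) = v x) :
    (H.index : ℤ) ∣ v (u 1) := by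
  haveI : Fintype (G ⧸ H) := Fintype.ofFinite _
  set c := (u 1) ((1 : G) : G ⧸ H) with hc
  set d := v (Finsupp.single ((1 : G) : G ⧸ H) (1 : ℤ)) with hd
  have key : v (u 1) = (Fintype.card (G ⧸ H) : ℤ) * (c * d) := by
    conv_lhs => rw [← Finsupp.univ_sum_single (u 1)]
    rw [map_sum]
    rw [Finset.sum_congr rfl fun a _ => by
      rw [stmt14_v_single H v hv, stmt14_u_const H u hu a, ← hc, ← hd]]
    rw [Finset.sum_const, Finset.card_univ, nsmul_eq_mul]
  rw [key, Subgroup.index, Nat.card_eq_fintype_card]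
  exact Dvd.intro _ rfl

lemma stmt14_bezout {ι : Type} [DecidableEq ι] (s : Finset ι) (f : ι → ℕ) :
    ∃ c : ι → ℤ, ∑ i ∈ s, c i * (f i : ℤ) = ((s.gcd f : ℕ) : ℤ) := by
  induction s using Finset.induction_on with
  | empty => exact ⟨0, by simp⟩
  | insert a s ha ih =>
    obtain ⟨c, hc⟩ := ih
    refine ⟨fun i => if i = a then Nat.gcdA (f a) (s.gcd f) else Nat.gcdB (f a) (s.gcd f) * c i,
      ?_⟩
    rw [Finset.sum_insert ha, Finset.gcd_insert]
    beta_reduce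
    rw [if_pos rfl]
    have h1 : ∑ i ∈ s, (if i = a then Nat.gcdA (f a) (s.gcd f)
        else Nat.gcdB (f a) (s.gcd f) * c i) * (f i : ℤ)
        = Nat.gcdB (f a) (s.gcd f) * ∑ i ∈ s, c i * (f i : ℤ) := by
      rw [Finset.mul_sum]
      refine Finset.sum_congr rfl fun i hi => ?_
      rw [if_neg (by rintro rfl; exact ha hi), mul_assoc]
    rw [h1, hc]
    have h2 : gcd (f a) (s.gcd f) = Nat.gcd (f a) (s.gcd f) := rfl
    rw [h2, Nat.gcd_eq_gcd_ab]
    ring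

end Aux

theorem stmt14 (G : Type u) [Group G] [Finite G] :
    -- (a) if `|G|` is divisible by two distinct primes:
    ((∃ p q : ℕ, p.Prime ∧ q.Prime ∧ p ≠ q ∧ p ∣ Nat.card G ∧ q ∣ Nat.card G) →
      ∃ (k : ℕ) (H : Fin k → Subgroup G), (∀ j, H j ≠ ⊤) ∧
        ∃ (u : ∀ j : Fin k, ℤ →+ ((G ⧸ H j) →₀ ℤ))
          (v : ∀ j : Fin k, ((G ⧸ H j) →₀ ℤ) →+ ℤ),
          -- `u` is G-equivariant (ℤ carries the trivial action):
          (∀ (j : Fin k) (g : G) (n : ℤ), g • u j n = u j n) ∧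
          -- `v` is G-equivariant:
          (∀ (j : Fin k) (g : G) (x : (G ⧸ H j) →₀ ℤ), v j (g • x) = v j x) ∧
          -- `v ∘ u = id`:
          (∑ j : Fin k, v j (u j 1)) = 1) ∧
    -- (b) if `G` is a nontrivial `p`-group:
    (∀ p : ℕ, p.Prime → IsPGroup p G → Nontrivial G →
      ∀ (k : ℕ) (H : Fin k → Subgroup G), (∀ j, H j ≠ ⊤) →
        ∀ (u : ∀ j : Fin k, ℤ →+ ((G ⧸ H j) →₀ ℤ))
          (v : ∀ j : Fin k, ((G ⧸ H j) →₀ ℤ) →+ ℤ),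
          (∀ (j : Fin k) (g : G) (n : ℤ), g • u j n = u j n) →
          (∀ (j : Fin k) (g : G) (x : (G ⧸ H j) →₀ ℤ), v j (g • x) = v j x) →
          -- the composite `v ∘ u` is multiplication by an integer divisible by `p`:
          (p : ℤ) ∣ ∑ j : Fin k, v j (u j 1)) := by
  constructor
  · -- part (a)
    rintro ⟨p, q, hp, hq, hpq, hpdvd, hqdvd⟩
    classical
    have hn0 : Nat.card G ≠ 0 := Nat.card_pos.ne'
    set S := (Nat.card G).primeFactors with hSdef
    have hpS : p ∈ S := Nat.mem_primeFactors.mpr ⟨hp, hpdvd, hn0⟩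
    have key : ∀ r ∈ S, ∃ K : Subgroup G, K ≠ ⊤ ∧ ¬ r ∣ K.index := by
      intro r hr
      have hrp : r.Prime := Nat.prime_of_mem_primeFactors hr
      haveI := Fact.mk hrp
      obtain ⟨P⟩ : Nonempty (Sylow r G) := inferInstance
      refine ⟨P, ?_, P.not_dvd_index⟩
      -- properness
      set t := if r = p then q else p with htdef
      have ht : t.Prime ∧ t ∣ Nat.card G ∧ t ≠ r := by
        rw [htdef]; split_ifs with h
        · exact ⟨hq, hqdvd, by rw [h]; exact hpq.symm⟩
        · exact ⟨hp, hpdvd, fun hh => h hh.symm⟩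
      intro htop
      have hcard : Nat.card ((P : Subgroup G) : Type u) * (P : Subgroup G).index
          = Nat.card G := Subgroup.card_mul_index _
      obtain ⟨m, hm⟩ := P.isPGroup'.exists_card_eq
      have hidx : (P : Subgroup G).index = 1 := Subgroup.index_eq_one.mpr htop
      have : t ∣ r ^ m := by
        rw [← hm, ← Nat.mul_one (Nat.card _), ← hidx, hcard]; exact ht.2.1
      exact ht.2.2 ((Nat.prime_dvd_prime_iff_eq ht.1 hrp).mp (ht.1.dvd_of_dvd_pow this))
    choose K hK1 hK2 using key
    set k := S.card with hkdef
    set H : Fin k → Subgroup G := fun j => K (S.equivFin.symm j) (S.equivFin.symm j).2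
      with hHdef
    have hHidx : ∀ j, (H j).index ∣ Nat.card G := fun j => (H j).index_dvd_card
    have hgcd : (Finset.univ : Finset (Fin k)).gcd (fun j => (H j).index) = 1 := by
      by_contra hne
      obtain ⟨t, ht, htdvd⟩ := Nat.exists_prime_and_dvd hne
      have hall : ∀ j, t ∣ (H j).index := fun j =>
        htdvd.trans (Finset.gcd_dvd (Finset.mem_univ j))
      have htn : t ∣ Nat.card G := (hall (S.equivFin ⟨p, hpS⟩)).trans (hHidx _)
      have htS : t ∈ S := Nat.mem_primeFactors.mpr ⟨ht, htn, hn0⟩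
      have h2 := hall (S.equivFin ⟨t, htS⟩)
      rw [hHdef] at h2
      simp only [Equiv.symm_apply_apply] at h2
      exact hK2 t htS h2
    obtain ⟨c, hc⟩ := stmt14_bezout Finset.univ (fun j => (H j).index)
    rw [hgcd, Nat.cast_one] at hc
    haveI : ∀ j, Fintype (G ⧸ H j) := fun j => Fintype.ofFinite _
    refine ⟨k, H, fun j => hK1 _ _, fun j => stmt14uu (H j) (c j),
      fun j => stmt14vv (H j), fun j g n => stmt14uu_smul _ _ g n,
      fun j g x => stmt14vv_smul _ g x, ?_⟩
    have hsum : ∑ j : Fin k, stmt14vv (H j) (stmt14uu (H j) (c j) 1)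
        = ∑ j : Fin k, c j * ((H j).index : ℤ) :=
      Finset.sum_congr rfl fun j _ => stmt14vv_uu (H j) (c j)
    rw [hsum, hc]
  · -- part (b)
    intro p hp hpG _ k H hH u v hu hv
    refine Finset.dvd_sum fun j _ => ?_
    have h1 : ((H j).index : ℤ) ∣ v j (u j 1) :=
      stmt14_index_dvd (H j) (u j) (v j) (fun g => hu j g 1) (hv j)
    have h2 : p ∣ (H j).index := by
      haveI := Fact.mk hp
      obtain ⟨m, hm⟩ := hpG.exists_card_eq
      have hdvd : (H j).index ∣ p ^ m := hm ▸ (H j).index_dvd_card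
      obtain ⟨l, _, hl⟩ := (Nat.dvd_prime_pow hp).mp hdvd
      have hl0 : l ≠ 0 := by
        rintro rfl
        exact hH j (Subgroup.index_eq_one.mp (by rw [hl, pow_zero]))
      rw [hl]
      exact dvd_pow_self p hl0
    exact (Int.natCast_dvd_natCast.mpr h2).trans h1
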